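/- Let m = 2k+1. The number of matrices A ∈ GL(m, 𝔽₂) with A·Aᵗ = I is 2^{k²}·∏_{i=1}^{k}(2^{2i} - 1). -/

import Mathlib

open Finset Matrix

namespace OrthCount

abbrev Vc (n : ℕ) := Fin n → ZMod 2

def jj (n : ℕ) : Vc n := fun _ => 1

def Orth {n i : ℕ} (g : Fin i → Vc n) : Prop :=
  ∀ a b, g a ⬝ᵥ g b = if a = b then 1 else 0

instance {n i : ℕ} : DecidablePred (Orth (n := n) (i := i)) := fun _ => by
  unfold Orth; infer_instance

def Tset (n i : ℕ) : Finset (Fin i → Vc n) := univ.filter Orth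

def Gset (n i : ℕ) : Finset (Fin i → Vc n) :=
  univ.filter (fun g => Orth g ∧ ∑ l, g l ≠ jj n)

lemma zmod2_mul_self (x : ZMod 2) : x * x = x := by revert x; decide

lemma dot_self_eq {n : ℕ} (v : Vc n) : v ⬝ᵥ v = jj n ⬝ᵥ v := by
  simp [dotProduct, jj, zmod2_mul_self]

lemma jj_dot_jj {n : ℕ} (hn : n % 2 = 1) : jj n ⬝ᵥ jj n = (1 : ZMod 2) := by
  simp only [dotProduct, jj, mul_one, Finset.sum_const, Finset.card_univ,
    Fintype.card_fin, nsmul_eq_mul, mul_one]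
  rw [← ZMod.natCast_mod n 2, hn]
  norm_num

lemma dot_sum {n i : ℕ} (v : Vc n) (f : Fin i → Vc n) :
    v ⬝ᵥ (∑ t, f t) = ∑ t, v ⬝ᵥ f t := by
  simp only [dotProduct, Finset.sum_apply, Finset.mul_sum]
  rw [Finset.sum_comm]

lemma sum_dot {n i : ℕ} (v : Vc n) (f : Fin i → Vc n) :
    (∑ t, f t) ⬝ᵥ v = ∑ t, f t ⬝ᵥ v := by
  rw [dotProduct_comm, dot_sum]
  simp [dotProduct_comm]

lemma orth_dot_jj {n i : ℕ} {g : Fin i → Vc n} (hg : Orth g) (l : Fin i) :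
    g l ⬝ᵥ jj n = 1 := by
  rw [dotProduct_comm, ← dot_self_eq, hg l l, if_pos rfl]

lemma jj_dot_orth {n i : ℕ} {g : Fin i → Vc n} (hg : Orth g) (l : Fin i) :
    jj n ⬝ᵥ g l = 1 := by
  rw [dotProduct_comm, orth_dot_jj hg]

lemma sum_dot_orth {n i : ℕ} {g : Fin i → Vc n} (hg : Orth g) (l : Fin i) :
    (∑ t, g t) ⬝ᵥ g l = 1 := by
  rw [sum_dot, Finset.sum_eq_single l]
  · rw [hg l l, if_pos rfl]
  · intro b _ hb; rw [hg b l, if_neg hb]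
  · intro h; exact absurd (Finset.mem_univ l) h

/-- There is a vector `w` orthogonal to all of `g` but pairing to `1` with `jj`. -/
lemma exists_w {n i : ℕ} (g : Fin i → Vc n) (hg : Orth g) (hs : ∑ l, g l ≠ jj n) :
    ∃ w : Vc n, jj n ⬝ᵥ w = 1 ∧ ∀ l, g l ⬝ᵥ w = 0 := by
  classical
  set s : Vc n := ∑ l, g l with hsdef
  set u : Vc n := jj n - s with hudef
  have hu0 : u ≠ 0 := by
    intro h
    exact hs (sub_eq_zero.mp h).symm
  obtain ⟨p, hp⟩ := Function.ne_iff.mp hu0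
  have hp' : u p ≠ 0 := by simpa using hp
  have hp1 : u p = 1 := by
    have : ∀ x : ZMod 2, x ≠ 0 → x = 1 := by decide
    exact this _ hp'
  set w' : Vc n := Pi.single p 1 with hw'def
  have hdotw' : ∀ v : Vc n, v ⬝ᵥ w' = v p := by
    intro v; rw [hw'def, dotProduct_single, mul_one]
  have hjw' : jj n ⬝ᵥ w' = 1 := by rw [hdotw']; rfl
  have huw' : u ⬝ᵥ w' = 1 := by rw [hdotw', hp1]
  refine ⟨w' + ∑ t, (g t ⬝ᵥ w') • g t, ?_, ?_⟩
  · rw [dotProduct_add, dot_sum]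
    have : ∀ t, jj n ⬝ᵥ ((g t ⬝ᵥ w') • g t) = g t ⬝ᵥ w' := by
      intro t
      rw [dotProduct_smul, jj_dot_orth hg, smul_eq_mul, mul_one]
    rw [Finset.sum_congr rfl (fun t _ => this t)]
    have hsw' : ∑ t, g t ⬝ᵥ w' = s ⬝ᵥ w' := (sum_dot _ _).symm
    have hs_eq : s = jj n - u := by rw [hudef]; ring
    rw [hjw', hsw', hs_eq, sub_dotProduct, hjw', huw']
    ring
  · intro l
    rw [dotProduct_comm, add_dotProduct, sum_dot]
    have : ∀ t, ((g t ⬝ᵥ w') • g t) ⬝ᵥ g l = (g t ⬝ᵥ w') * if t = l then 1 else 0 := by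
      intro t
      rw [smul_dotProduct, hg t l, smul_eq_mul]
    rw [Finset.sum_congr rfl (fun t _ => this t)]
    rw [Finset.sum_eq_single l]
    · rw [if_pos rfl, mul_one, dotProduct_comm]
      have : ∀ x : ZMod 2, x + x = 0 := by decide
      exact this _
    · intro b _ hb; rw [if_neg hb, mul_zero]
    · intro h; exact absurd (Finset.mem_univ l) h

lemma surj_aux {n i : ℕ} (g : Fin i → Vc n) (hg : Orth g) (hs : ∑ l, g l ≠ jj n) :
    Function.Surjective
      (fun v : Vc n => ((jj n ⬝ᵥ v, fun l => g l ⬝ᵥ v) : ZMod 2 × (Fin i → ZMod 2))) := by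
  obtain ⟨w, hjw, hgw⟩ := exists_w g hg hs
  rintro ⟨b0, b⟩
  refine ⟨(b0 - ∑ t, b t) • w + ∑ t, b t • g t, ?_⟩
  have hj : jj n ⬝ᵥ ((b0 - ∑ t, b t) • w + ∑ t, b t • g t) = b0 := by
    rw [dotProduct_add, dotProduct_smul, hjw, dot_sum]
    have : ∀ t, jj n ⬝ᵥ (b t • g t) = b t := by
      intro t; rw [dotProduct_smul, jj_dot_orth hg, smul_eq_mul, mul_one]
    rw [Finset.sum_congr rfl (fun t _ => this t), smul_eq_mul, mul_one]
    ring
  have hgl : ∀ l, g l ⬝ᵥ ((b0 - ∑ t, b t) • w + ∑ t, b t • g t) = b l := by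
    intro l
    rw [dotProduct_add, dotProduct_smul, hgw l, dot_sum]
    have : ∀ t, g l ⬝ᵥ (b t • g t) = if l = t then b t else 0 := by
      intro t
      rw [dotProduct_smul, hg l t, smul_eq_mul, mul_ite, mul_one, mul_zero]
    rw [Finset.sum_congr rfl (fun t _ => this t), Finset.sum_ite_eq,
      if_pos (Finset.mem_univ l), smul_zero, zero_add]
  exact Prod.ext hj (funext hgl)

lemma card_fiber_of_surj {A B : Type*} [AddCommGroup A] [AddCommGroup B]
    [Fintype A] [Fintype B] [DecidableEq A] [DecidableEq B]
    (f : A → B) (hadd : ∀ x y, f (x + y) = f x + f y)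
    (hsurj : Function.Surjective f) (y : B) :
    (univ.filter (fun a => f a = y)).card * Fintype.card B = Fintype.card A := by
  classical
  have hsub : ∀ x z : A, f (x - z) = f x - f z := by
    intro x z
    exact (AddMonoidHom.mk' f hadd).map_sub x z
  have hfib : ∀ y' z : B,
      (univ.filter fun a => f a = y').card = (univ.filter fun a => f a = z).card := by
    intro y' z
    obtain ⟨d, hd⟩ := hsurj (z - y')
    apply Finset.card_bij (fun a _ => a + d)
    · intro a ha
      simp only [mem_filter, mem_univ, true_and] at ha ⊢
      rw [hadd, ha, hd]; abel
    · intro a _ b _ hab; exact add_right_cancel hab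
    · intro b hb
      simp only [mem_filter, mem_univ, true_and] at hb ⊢
      refine ⟨b - d, ?_, by abel⟩
      rw [hsub, hb, hd]; abel
  have hsum := Finset.card_eq_sum_card_fiberwise
    (s := (univ : Finset A)) (t := (univ : Finset B)) (f := f) (fun x _ => mem_univ _)
  rw [Finset.card_univ] at hsum
  rw [hsum, Finset.sum_congr rfl (fun b _ => hfib b y), Finset.sum_const,
    Finset.card_univ, smul_eq_mul, mul_comm]

lemma ext_count {n i : ℕ} (hin : i < n) (hn : n % 2 = 1)
    (g : Fin i → Vc n) (hg : Orth g) (hs : ∑ l, g l ≠ jj n) :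
    (univ.filter (fun v : Vc n => v ⬝ᵥ v = 1 ∧ ∀ l, v ⬝ᵥ g l = 0)).card
      = 2 ^ (n - 1 - i) := by
  classical
  set f : Vc n → ZMod 2 × (Fin i → ZMod 2) :=
    fun v => (jj n ⬝ᵥ v, fun l => g l ⬝ᵥ v) with hf
  have hadd : ∀ x y, f (x + y) = f x + f y := by
    intro x y
    simp only [hf, dotProduct_add, Prod.mk_add_mk, Prod.mk.injEq]
    exact ⟨trivial, funext fun l => rfl⟩
  have hcond : ∀ v : Vc n,
      (v ⬝ᵥ v = 1 ∧ ∀ l, v ⬝ᵥ g l = 0) ↔ f v = ((1 : ZMod 2), (0 : Fin i → ZMod 2)) := by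
    intro v
    rw [hf]
    simp only [Prod.mk.injEq, funext_iff, Pi.zero_apply]
    constructor
    · rintro ⟨h1, h2⟩
      exact ⟨by rw [← dot_self_eq, h1], fun l => by rw [dotProduct_comm]; exact h2 l⟩
    · rintro ⟨h1, h2⟩
      exact ⟨by rw [dot_self_eq, h1], fun l => by rw [dotProduct_comm]; exact h2 l⟩
  rw [Finset.filter_congr (fun v _ => hcond v)]
  have hkey := card_fiber_of_surj f hadd (surj_aux g hg hs) ((1 : ZMod 2), (0 : Fin i → ZMod 2))
  have hcA : Fintype.card (Vc n) = 2 ^ n := by simp [Vc]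
  have hcB : Fintype.card (ZMod 2 × (Fin i → ZMod 2)) = 2 ^ (i + 1) := by
    simp [pow_succ, mul_comm]
  rw [hcA, hcB] at hkey
  have hpow : 2 ^ n = 2 ^ (n - 1 - i) * 2 ^ (i + 1) := by
    rw [← pow_add]
    congr 1
    omega
  rw [hpow] at hkey
  exact Nat.eq_of_mul_eq_mul_right (by positivity) hkey

lemma ext_count_bad {n i : ℕ} (g : Fin i → Vc n) (hg : Orth g) (hs : ∑ l, g l = jj n) :
    (univ.filter (fun v : Vc n => v ⬝ᵥ v = 1 ∧ ∀ l, v ⬝ᵥ g l = 0)).card = 0 := by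
  rw [Finset.card_eq_zero, Finset.eq_empty_iff_forall_notMem]
  intro v hv
  simp only [mem_filter, mem_univ, true_and] at hv
  obtain ⟨h1, h2⟩ := hv
  have : v ⬝ᵥ v = 0 := by
    rw [dot_self_eq, ← hs, dotProduct_comm, dot_sum]
    rw [Finset.sum_congr rfl (fun l _ => h2 l), Finset.sum_const, smul_zero]
  rw [h1] at this
  exact one_ne_zero this


def v0 {n i : ℕ} (g : Fin i → Vc n) : Vc n := jj n - ∑ l, g l

lemma v0_dot_orth {n i : ℕ} (hn : n % 2 = 1) {g : Fin i → Vc n} (hg : Orth g) (l : Fin i) :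
    v0 g ⬝ᵥ g l = 0 := by
  rw [v0, sub_dotProduct, jj_dot_orth hg, sum_dot_orth hg, sub_self]

lemma v0_self_dot {n i : ℕ} (hn : n % 2 = 1) {g : Fin i → Vc n} (hg : Orth g) :
    v0 g ⬝ᵥ v0 g = 1 - (i : ZMod 2) := by
  rw [dot_self_eq, v0, dotProduct_sub, jj_dot_jj hn, dot_sum]
  rw [Finset.sum_congr rfl (fun l _ => jj_dot_orth hg l), Finset.sum_const,
    Finset.card_univ, Fintype.card_fin, nsmul_eq_mul, mul_one]

lemma v0_cond_iff {n i : ℕ} (hn : n % 2 = 1) (g : Fin i → Vc n) (hg : Orth g) :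
    (v0 g ⬝ᵥ v0 g = 1 ∧ ∀ l, v0 g ⬝ᵥ g l = 0) ↔ Even i := by
  have h2 : ∀ l, v0 g ⬝ᵥ g l = 0 := v0_dot_orth hn hg
  simp only [h2, implies_true, and_true]
  rw [v0_self_dot hn hg, sub_eq_self]
  rw [ZMod.natCast_eq_zero_iff]
  exact (even_iff_two_dvd).symm

lemma orth_cons {n i : ℕ} {g : Fin i → Vc n} {v : Vc n} :
    Orth (Fin.cons v g) ↔ Orth g ∧ v ⬝ᵥ v = 1 ∧ ∀ l, v ⬝ᵥ g l = 0 := by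
  constructor
  · intro h
    refine ⟨fun a b => ?_, ?_, fun l => ?_⟩
    · have := h a.succ b.succ
      simpa [Fin.cons_succ, Fin.succ_inj] using this
    · have := h 0 0
      simpa using this
    · have := h 0 l.succ
      simpa [Fin.cons_succ, Fin.cons_zero, (Fin.succ_ne_zero l).symm] using this
  · rintro ⟨hg, hv, hvg⟩ a b
    induction a using Fin.cases with
    | zero =>
      induction b using Fin.cases with
      | zero => simpa using hv
      | succ b' =>
        simp [Fin.cons_succ, Fin.cons_zero, hvg b', (Fin.succ_ne_zero b').symm]
    | succ a' =>
      induction b using Fin.cases with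
      | zero =>
        have h0 : g a' ⬝ᵥ v = 0 := by rw [dotProduct_comm]; exact hvg a'
        simp [Fin.cons_succ, Fin.cons_zero, h0, Fin.succ_ne_zero a']
      | succ b' =>
        simp [Fin.cons_succ, hg a' b', Fin.succ_inj]

lemma card_cons_decomp {n i : ℕ} (P : (Fin (i+1) → Vc n) → Prop) [DecidablePred P] :
    (univ.filter P).card
      = ∑ t : Fin i → Vc n, (univ.filter (fun v : Vc n => P (Fin.cons v t))).card := by
  classical
  rw [Finset.card_eq_sum_card_fiberwise
    (f := Fin.tail) (t := (univ : Finset (Fin i → Vc n))) (fun x _ => mem_univ _)]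
  refine Finset.sum_congr rfl fun t _ => ?_
  apply Finset.card_bij (fun g _ => g 0)
  · intro g hgm
    simp only [mem_filter, mem_univ, true_and] at hgm ⊢
    obtain ⟨h1, h2⟩ := hgm
    rw [← h2]
    rwa [Fin.cons_self_tail]
  · intro g1 h1 g2 h2 he
    simp only [mem_filter, mem_univ, true_and] at h1 h2
    rw [← Fin.cons_self_tail g1, ← Fin.cons_self_tail g2, h1.2, h2.2, he]
  · intro v hv
    simp only [mem_filter, mem_univ, true_and] at hv ⊢
    exact ⟨Fin.cons v t, ⟨hv, by simp⟩, rfl⟩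

lemma Tcard_succ {n i : ℕ} (hn : n % 2 = 1) (hin : i < n) :
    (Tset n (i+1)).card = (Gset n i).card * 2 ^ (n - 1 - i) := by
  classical
  rw [Tset, card_cons_decomp]
  have key : ∀ t : Fin i → Vc n,
      (univ.filter fun v : Vc n => Orth (Fin.cons v t)).card
        = if t ∈ Gset n i then 2 ^ (n-1-i) else 0 := by
    intro t
    have hre : (univ.filter fun v : Vc n => Orth (Fin.cons v t))
        = univ.filter (fun v : Vc n => Orth t ∧ v ⬝ᵥ v = 1 ∧ ∀ l, v ⬝ᵥ t l = 0) :=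
      Finset.filter_congr (fun v _ => orth_cons)
    rw [hre]
    by_cases ht : Orth t
    · simp only [ht, true_and]
      by_cases hsum : ∑ l, t l = jj n
      · rw [if_neg (by simp [Gset, hsum]), ext_count_bad t ht hsum]
      · rw [if_pos (by simp [Gset, ht, hsum]), ext_count hin hn t ht hsum]
    · rw [if_neg (by simp [Gset, ht])]
      simp [ht]
  rw [Finset.sum_congr rfl (fun t _ => key t), Finset.sum_ite_mem, Finset.univ_inter,
    Finset.sum_const, smul_eq_mul]

lemma Gcard_succ {n i : ℕ} (hn : n % 2 = 1) (hin : i < n) :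
    (Gset n (i+1)).card
      = (Gset n i).card * (2 ^ (n - 1 - i) - if Even i then 1 else 0) := by
  classical
  rw [Gset, card_cons_decomp]
  have key : ∀ t : Fin i → Vc n,
      (univ.filter fun v : Vc n =>
          Orth (Fin.cons v t) ∧ ∑ l, Fin.cons v t l ≠ jj n).card
        = if t ∈ Gset n i then 2 ^ (n-1-i) - (if Even i then 1 else 0) else 0 := by
    intro t
    have hre : (univ.filter fun v : Vc n =>
          Orth (Fin.cons v t) ∧ ∑ l, Fin.cons v t l ≠ jj n)
        = (univ.filter (fun v : Vc n => Orth t ∧ v ⬝ᵥ v = 1 ∧ ∀ l, v ⬝ᵥ t l = 0)).erase (v0 t) := by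
      ext v
      simp only [Finset.mem_erase, mem_filter, mem_univ, true_and, orth_cons, Fin.sum_cons]
      constructor
      · rintro ⟨h1, h2⟩
        refine ⟨?_, h1⟩
        intro hv
        apply h2
        rw [hv, v0]
        ring
      · rintro ⟨h1, h2⟩
        refine ⟨h2, ?_⟩
        intro hv
        apply h1
        rw [v0, ← hv]
        ring
    rw [hre]
    by_cases ht : Orth t
    · simp only [ht, true_and]
      by_cases hsum : ∑ l, t l = jj n
      · rw [if_neg (by simp [Gset, hsum])]
        have h0 := ext_count_bad t ht hsum
        rw [Finset.card_eq_zero] at h0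
        rw [h0]
        simp
      · have htG : t ∈ Gset n i := by simp [Gset, ht, hsum]
        rw [if_pos htG]
        have hcount := ext_count hin hn t ht hsum
        by_cases hev : Even i
        · have hv0 : v0 t ∈ univ.filter (fun v : Vc n => v ⬝ᵥ v = 1 ∧ ∀ l, v ⬝ᵥ t l = 0) := by
            simp only [mem_filter, mem_univ, true_and]
            exact (v0_cond_iff hn t ht).mpr hev
          rw [Finset.card_erase_of_mem hv0, hcount, if_pos hev]
        · have hv0 : v0 t ∉ univ.filter (fun v : Vc n => v ⬝ᵥ v = 1 ∧ ∀ l, v ⬝ᵥ t l = 0) := by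
            simp only [mem_filter, mem_univ, true_and]
            intro hcontra
            exact hev ((v0_cond_iff hn t ht).mp hcontra)
          rw [Finset.erase_eq_of_notMem hv0, hcount, if_neg hev, Nat.sub_zero]
    · rw [if_neg (by simp [Gset, ht])]
      have : (univ.filter (fun v : Vc n => Orth t ∧ v ⬝ᵥ v = 1 ∧ ∀ l, v ⬝ᵥ t l = 0)) = ∅ := by
        rw [Finset.eq_empty_iff_forall_notMem]
        intro v hv
        simp only [mem_filter, mem_univ, true_and] at hv
        exact ht hv.1
      rw [this, Finset.erase_empty, Finset.card_empty]
  rw [Finset.sum_congr rfl (fun t _ => key t), Finset.sum_ite_mem, Finset.univ_inter,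
    Finset.sum_const, smul_eq_mul]

lemma Gcard_zero {n : ℕ} (hn : 0 < n) : (Gset n 0).card = 1 := by
  rw [Gset]
  have hall : ∀ g : Fin 0 → Vc n, Orth g ∧ ∑ l, g l ≠ jj n := by
    intro g
    refine ⟨fun a _ => a.elim0, ?_⟩
    intro h
    have h2 := congrFun h ⟨0, hn⟩
    simp [jj] at h2
  rw [Finset.filter_true_of_mem (fun g _ => hall g)]
  simp

lemma Gcard_formula (k : ℕ) :
    ∀ r ≤ 2 * k, (Gset (2*k+1) r).card
      = ∏ idx ∈ Finset.range r, (2 ^ (2*k - idx) - if Even (2*k - idx) then 1 else 0) := by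
  intro r
  induction r with
  | zero => intro _; rw [Finset.range_zero, Finset.prod_empty, Gcard_zero (by omega)]
  | succ r ih =>
    intro hr
    have hr' : r ≤ 2*k := by omega
    rw [Gcard_succ (by omega : (2*k+1) % 2 = 1) (by omega : r < 2*k+1), ih hr',
      Finset.prod_range_succ]
    have e1 : 2*k+1-1-r = 2*k-r := by omega
    have e2 : (Even (2*k - r)) ↔ (Even r) := by
      rw [Nat.even_sub hr']
      simp [Nat.even_mul]
    rw [e1]
    simp only [e2]

lemma prod_reindex (N : ℕ) :
    ∏ idx ∈ Finset.range N, (2 ^ (N - idx) - if Even (N - idx) then 1 else 0)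
      = ∏ j ∈ Finset.range N, (2 ^ (j+1) - if Even (j+1) then 1 else 0) := by
  rw [← Finset.prod_range_reflect (fun j => (2 ^ (j+1) - if Even (j+1) then 1 else 0 : ℕ)) N]
  refine Finset.prod_congr rfl fun idx hidx => ?_
  rw [Finset.mem_range] at hidx
  have : N - idx = (N - 1 - idx) + 1 := by omega
  rw [this]

lemma prod_formula (k : ℕ) :
    ∏ j ∈ Finset.range (2*k), (2 ^ (j+1) - if Even (j+1) then 1 else 0)
      = 2 ^ (k ^ 2) * ∏ i ∈ Finset.Icc 1 k, (2 ^ (2 * i) - 1) := by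
  induction k with
  | zero => simp
  | succ k ih =>
    have h2 : 2 * (k+1) = (2*k + 1) + 1 := by ring
    rw [h2, Finset.prod_range_succ, Finset.prod_range_succ, ih]
    have hodd : ¬ Even (2*k+1) := by simp [parity_simps]
    have hev : Even (2*k+1+1) := ⟨k+1, by ring⟩
    rw [if_neg hodd, if_pos hev, Nat.sub_zero]
    rw [Finset.prod_Icc_succ_top (by omega : 1 ≤ k+1)]
    have hpow : 2 ^ ((k+1)^2) = 2 ^ (k^2) * 2 ^ (2*k+1) := by
      rw [← pow_add]
      congr 1
      ring
    rw [hpow]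
    have he : 2 * (k+1) = 2*k+1+1 := by ring
    rw [he]
    ring

end OrthCount

theorem orthogonal_group_card_odd (k : ℕ) :
    (Finset.univ.filter
        (fun A : Matrix (Fin (2 * k + 1)) (Fin (2 * k + 1)) (ZMod 2) =>
          IsUnit A ∧ A * A.transpose = 1)).card =
      2 ^ (k ^ 2) * ∏ i ∈ Finset.Icc 1 k, (2 ^ (2 * i) - 1) := by
  classical
  open OrthCount in
  have hmain : (Finset.univ.filter
        (fun A : Matrix (Fin (2 * k + 1)) (Fin (2 * k + 1)) (ZMod 2) =>
          IsUnit A ∧ A * A.transpose = 1)).card = (Tset (2*k+1) (2*k+1)).card := by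
    apply Finset.card_bij (fun A _ => (Matrix.of.symm A : Fin (2*k+1) → Vc (2*k+1)))
    · intro A hA
      simp only [Finset.mem_filter, Finset.mem_univ, true_and] at hA
      simp only [Tset, Finset.mem_filter, Finset.mem_univ, true_and]
      intro a b
      have := congrFun (congrFun hA.2 a) b
      rw [Matrix.mul_apply, Matrix.one_apply] at this
      simp only [Matrix.transpose_apply] at this
      exact this
    · intro A _ B _ h
      exact h
    · intro g hg
      simp only [Tset, Finset.mem_filter, Finset.mem_univ, true_and] at hg
      refine ⟨Matrix.of g, ?_, rfl⟩
      simp only [Finset.mem_filter, Finset.mem_univ, true_and]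
      have hmul : (Matrix.of g) * (Matrix.of g).transpose = 1 := by
        ext a b
        rw [Matrix.mul_apply, Matrix.one_apply]
        simpa [dotProduct] using hg a b
      letI := invertibleOfRightInverse _ _ hmul
      exact ⟨isUnit_of_invertible _, hmul⟩
  rw [hmain]
  have : (Tset (2*k+1) (2*k+1)).card = (Gset (2*k+1) (2*k)).card := by
    have := OrthCount.Tcard_succ (n := 2*k+1) (i := 2*k) (by omega) (by omega)
    rw [this]
    have : 2*k+1-1-2*k = 0 := by omega
    rw [this, pow_zero, mul_one]
  rw [this, OrthCount.Gcard_formula k (2*k) le_rfl, OrthCount.prod_reindex,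
    OrthCount.prod_formula]
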